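/- For i, j = 0,…,⌊n/2⌋, k = 0,…,n, u ∈ U_i and v ∈ U_j, one has uᵀ W_{i,k} W_{k,j} v = δ_{i,j} · q^{i(k−i)} [n−2i choose k−i]_q · uᵀ v, where δ_{i,j} is the Kronecker delta. -/

import Mathlib

open Matrix

/-- The Gaussian binomial coefficient `[a choose b]_q`, as a real number:
`∏_{i=0}^{b-1} (q^(a-i)-1)/(q^(b-i)-1)` for `a, b ≥ 0`, and `0` if `a < 0` or `b < 0`. -/
noncomputable def gbinom (q : ℝ) (a b : ℤ) : ℝ :=
  if 0 ≤ a ∧ 0 ≤ b then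
    ∏ i ∈ Finset.range b.toNat, (q ^ (a - i) - 1) / (q ^ (b - i) - 1)
  else 0

/-- The matrix `W_{k,ℓ}` on `L(V) × L(V)`: `(W_{k,ℓ})_{x,y} = 1` if `dim x = k`, `dim y = ℓ`
and `dim (x ⊓ y) = min k ℓ`, and `0` otherwise.  (Indices in `ℤ`, so that `W_{-1,0} = 0`.) -/
noncomputable def Wmat (K V : Type*) [Field K] [AddCommGroup V] [Module K V] (k l : ℤ) :
    Matrix (Submodule K V) (Submodule K V) ℝ :=
  Matrix.of fun x y =>
    if (Module.finrank K x : ℤ) = k ∧ (Module.finrank K y : ℤ) = l ∧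
        (Module.finrank K ↥(x ⊓ y) : ℤ) = min k l then 1 else 0

/-- The subspace `U_i ⊆ ℝ^{L(V)}` of vectors supported on `L_i(V)` and killed by
`W_{i-1,i}`. -/
noncomputable def Usub (K V : Type*) [Field K] [AddCommGroup V] [Module K V]
    [Fintype (Submodule K V)] (i : ℕ) : Submodule ℝ (Submodule K V → ℝ) :=
  LinearMap.ker (Matrix.mulVecLin (Wmat K V ((i : ℤ) - 1) (i : ℤ))) ⊓
    ⨅ x ∈ {x : Submodule K V | Module.finrank K x ≠ i},
      LinearMap.ker (LinearMap.proj (R := ℝ) (φ := fun _ : Submodule K V => ℝ) x)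


open Module Submodule Finset

set_option linter.unusedSectionVars false

theorem zpow_sub_one_ne {q : ℝ} (hq : 1 < q) {z : ℤ} (hz : 0 < z) : q ^ z - 1 ≠ 0 := by
  have := one_lt_zpow₀ hq hz
  linarith

theorem gbinom_neg {q : ℝ} {a b : ℤ} (hb : b < 0) : gbinom q a b = 0 := by
  rw [gbinom, if_neg]
  rintro ⟨-, h⟩
  omega

theorem gbinom_zero {q : ℝ} {a : ℤ} (ha : 0 ≤ a) : gbinom q a 0 = 1 := by
  rw [gbinom, if_pos ⟨ha, le_refl 0⟩]
  simp

theorem gbinom_succ {q : ℝ} (hq : 1 < q) {a b : ℤ} (ha : 0 ≤ a) (hb : 0 < b) :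
    gbinom q a b = gbinom q a (b - 1) * ((q ^ (a - b + 1) - 1) / (q ^ b - 1)) := by
  have hq0 : q ≠ 0 := by linarith
  obtain ⟨bn, hbn⟩ : ∃ bn : ℕ, b = (bn : ℤ) + 1 := by
    refine ⟨(b - 1).toNat, by omega⟩
  have htn : b.toNat = bn + 1 := by omega
  have htn' : (b - 1).toNat = bn := by omega
  rw [gbinom, gbinom, if_pos ⟨ha, le_of_lt hb⟩, if_pos ⟨ha, by omega⟩, htn, htn']
  rw [Finset.prod_div_distrib, Finset.prod_div_distrib]
  have hNa : ∏ t ∈ Finset.range (bn + 1), (q ^ (a - t) - 1)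
      = (∏ t ∈ Finset.range bn, (q ^ (a - t) - 1)) * (q ^ (a - b + 1) - 1) := by
    rw [Finset.prod_range_succ]
    have : a - (bn : ℤ) = a - b + 1 := by omega
    rw [this]
  have hDa : ∏ t ∈ Finset.range (bn + 1), (q ^ (b - t) - 1)
      = (∏ t ∈ Finset.range bn, (q ^ (b - 1 - t) - 1)) * (q ^ b - 1) := by
    rw [Finset.prod_range_succ']
    congr 1
    · refine Finset.prod_congr rfl (fun t _ => ?_)
      congr 2
      push_cast
      ring
    · simp
  have hDne : (∏ t ∈ Finset.range bn, (q ^ (b - 1 - t) - 1)) ≠ 0 := by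
    refine Finset.prod_ne_zero_iff.mpr (fun t ht => ?_)
    refine zpow_sub_one_ne hq ?_
    have := Finset.mem_range.mp ht
    omega
  have hbne : q ^ b - 1 ≠ 0 := zpow_sub_one_ne hq hb
  rw [hNa, hDa]
  field_simp

theorem rhs_step {q : ℝ} (hq : 1 < q) {n i k : ℤ} (h2i : 2 * i ≤ n) (h0i : 0 ≤ i)
    (hik : i ≤ k) (hkn : k < n) :
    q ^ (i * (k + 1 - i)) * gbinom q (n - 2 * i) (k + 1 - i)
      = ((q ^ (n - k) - q ^ i) / (q ^ (k + 1 - i) - 1))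
        * (q ^ (i * (k - i)) * gbinom q (n - 2 * i) (k - i)) := by
  have hq0 : q ≠ 0 := by linarith
  have hrec := gbinom_succ hq (a := n - 2 * i) (b := k + 1 - i) (by omega) (by omega)
  have e1 : k + 1 - i - 1 = k - i := by ring
  have e2 : n - 2 * i - (k + 1 - i) + 1 = n - i - k := by ring
  rw [e1, e2] at hrec
  rw [hrec]
  have e3 : q ^ (i * (k + 1 - i)) = q ^ (i * (k - i)) * q ^ i := by
    rw [← zpow_add₀ hq0]
    congr 1
    ring
  have e4 : q ^ i * (q ^ (n - i - k) - 1) = q ^ (n - k) - q ^ i := by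
    rw [mul_sub, mul_one, ← zpow_add₀ hq0]
    congr 2
    ring
  rw [e3, ← e4]
  ring


section Counting

variable {K : Type*} [Field K] [Fintype K]

local notation "Q" => Fintype.card K

/-- Fiber of span over a subspace of the right dimension. -/
noncomputable def fiberEquiv {W : Type*} [AddCommGroup W] [Module K W] [FiniteDimensional K W] (d : ℕ)
    (p : Submodule K W) (hp : finrank K p = d) :
    {s : Fin d → W // LinearIndependent K s ∧ Submodule.span K (Set.range s) = p}
      ≃ {t : Fin d → p // LinearIndependent K t} where
  toFun s := ⟨fun i => ⟨s.1 i, by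
      have := Submodule.subset_span (R := K) (s := Set.range s.1) (Set.mem_range_self i)
      rwa [s.2.2] at this⟩, by
    apply LinearIndependent.of_comp p.subtype
    exact s.2.1⟩
  invFun t := ⟨fun i => (t.1 i : W), by
    constructor
    · exact t.2.map' p.subtype (Submodule.ker_subtype p)
    · have hcard : Fintype.card (Fin d) = finrank K p := by simp [hp]
      rcases Nat.eq_zero_or_pos d with hd | hd
      · subst hd
        have : finrank K p = 0 := hp ▸ rfl
        have hpbot : p = ⊥ := Submodule.finrank_eq_zero.mp this
        simp [Set.range_eq_empty, hpbot]
      · have : Nonempty (Fin d) := ⟨⟨0, hd⟩⟩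
        have hspan := t.2.span_eq_top_of_card_eq_finrank hcard
        have : Set.range (fun i => (t.1 i : W)) = p.subtype '' (Set.range t.1) := by
          ext w; simp [Set.range_comp]
        rw [this, Submodule.span_image, hspan, Submodule.map_subtype_top]⟩
  left_inv s := Subtype.ext rfl
  right_inv t := Subtype.ext rfl

theorem card_subspaces_mul {W : Type*} [AddCommGroup W] [Module K W] [FiniteDimensional K W]
    (d : ℕ) (hd : d ≤ finrank K W) :
    Nat.card {p : Submodule K W // finrank K p = d} *
      ∏ i ∈ Finset.range d, (Q ^ d - Q ^ i) = ∏ i ∈ Finset.range d, (Q ^ finrank K W - Q ^ i) := by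
  classical
  have : Finite W := Module.finite_of_finite K
  letI : Fintype W := Fintype.ofFinite W
  -- total count of linearly independent d-tuples
  have htot : Nat.card {s : Fin d → W // LinearIndependent K s}
      = ∏ i ∈ Finset.range d, (Q ^ finrank K W - Q ^ i) := by
    rw [card_linearIndependent hd, ← Fin.prod_univ_eq_prod_range]
  -- fiberwise count
  have hfiber : ∀ p : Submodule K W, finrank K p = d →
      Nat.card {s : Fin d → W // LinearIndependent K s ∧ Submodule.span K (Set.range s) = p}
        = ∏ i ∈ Finset.range d, (Q ^ d - Q ^ i) := by
    intro p hp
    rw [Nat.card_congr (fiberEquiv d p hp)]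
    have : Finite p := Subtype.finite
    have := card_linearIndependent (K := K) (V := p) (k := d) (le_of_eq hp.symm)
    rw [this, hp, ← Fin.prod_univ_eq_prod_range]
  -- split total by fibers
  have key : Nat.card {s : Fin d → W // LinearIndependent K s}
      = Nat.card {p : Submodule K W // finrank K p = d} *
          ∏ i ∈ Finset.range d, (Q ^ d - Q ^ i) := by
    rw [Nat.card_eq_fintype_card, ← Finset.card_univ,
      Finset.card_eq_sum_card_fiberwise
        (f := fun s : {s : Fin d → W // LinearIndependent K s} =>
          Submodule.span K (Set.range s.1)) (t := Finset.univ) (fun _ _ => Finset.mem_univ _)]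
    have hcardfib : ∀ p : Submodule K W,
        (Finset.univ.filter (fun s : {s : Fin d → W // LinearIndependent K s} =>
          Submodule.span K (Set.range s.1) = p)).card
        = if finrank K p = d then ∏ i ∈ Finset.range d, (Q ^ d - Q ^ i) else 0 := by
      intro p
      rw [← Fintype.card_subtype]
      split_ifs with hp
      · rw [← hfiber p hp, Nat.card_eq_fintype_card]
        exact Fintype.card_congr (Equiv.subtypeSubtypeEquivSubtypeInter (fun s : Fin d → W => LinearIndependent K s) (fun s => span K (Set.range s) = p))
      · rw [Fintype.card_eq_zero_iff]
        constructor
        rintro ⟨⟨s, hs⟩, hsp⟩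
        apply hp
        rw [← hsp]
        simp only at hsp ⊢
        rw [finrank_span_eq_card hs, Fintype.card_fin]
    rw [Finset.sum_congr rfl (fun p _ => hcardfib p), Nat.card_eq_fintype_card,
      Fintype.card_subtype]
    simp [Finset.sum_ite, Finset.sum_const]
  omega

end Counting


section Counting2
variable {K : Type*} [Field K] [Fintype K]
local notation "Q" => Fintype.card K

/-- Number of `d`-dimensional subspaces of an `N`-dimensional space over `K`. -/
noncomputable def nsub (K : Type*) [Field K] [Fintype K] (N d : ℕ) : ℕ :=
  Nat.card {P : Submodule K (Fin N → K) // finrank K P = d}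

theorem nsub_eq_card {W : Type*} [AddCommGroup W] [Module K W] [FiniteDimensional K W]
    {N d : ℕ} (hW : finrank K W = N) :
    Nat.card {P : Submodule K W // finrank K P = d} = nsub K N d := by
  have hfr : finrank K W = finrank K (Fin N → K) := by
    rw [hW, Module.finrank_fintype_fun_eq_card, Fintype.card_fin]
  obtain ⟨e⟩ := FiniteDimensional.nonempty_linearEquiv_of_finrank_eq hfr
  exact Nat.card_congr (Equiv.subtypeEquiv (Submodule.orderIsoMapComap e).toEquiv
    (fun p => by
      have : finrank K (Submodule.map (e : W →ₗ[K] (Fin N → K)) p) = finrank K p := LinearEquiv.finrank_map_eq e p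
      rw [show (Submodule.orderIsoMapComap e).toEquiv p = Submodule.map (e : W →ₗ[K] (Fin N → K)) p from rfl, this]))

theorem nsub_mul {N d : ℕ} (hd : d ≤ N) :
    nsub K N d * ∏ i ∈ Finset.range d, (Q ^ d - Q ^ i)
      = ∏ i ∈ Finset.range d, (Q ^ N - Q ^ i) := by
  have hfr : finrank K (Fin N → K) = N := by
    rw [Module.finrank_fintype_fun_eq_card, Fintype.card_fin]
  have := card_subspaces_mul (K := K) (W := Fin N → K) d (by rwa [hfr])
  rwa [hfr] at this

theorem one_lt_Q : 1 < Q := Fintype.one_lt_card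

theorem nsub_pos {N d : ℕ} (hd : d ≤ N) : 0 < nsub K N d := by
  have h := nsub_mul (K := K) hd
  have hpos : 0 < ∏ i ∈ Finset.range d, (Q ^ N - Q ^ i) := by
    apply Finset.prod_pos
    intro i hi
    have : Q ^ i < Q ^ N :=
      Nat.pow_lt_pow_right (one_lt_Q (K := K)) (lt_of_lt_of_le (Finset.mem_range.mp hi) hd)
    omega
  refine Nat.pos_of_ne_zero (fun h0 => ?_)
  rw [h0, zero_mul] at h
  exact hpos.ne h

theorem nsub_zero (N : ℕ) : nsub K N 0 = 1 := by
  have := nsub_mul (K := K) (N := N) (d := 0) (Nat.zero_le N)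
  simpa using this

theorem nsub_self (N : ℕ) : nsub K N N = 1 := by
  have h := nsub_mul (K := K) (N := N) (d := N) le_rfl
  have hpos : 0 < ∏ i ∈ Finset.range N, (Q ^ N - Q ^ i) := by
    apply Finset.prod_pos
    intro i hi
    have : Q ^ i < Q ^ N := Nat.pow_lt_pow_right (one_lt_Q (K := K)) (Finset.mem_range.mp hi)
    omega
  nlinarith [h, hpos]

theorem nsub_eq_zero {N d : ℕ} (hd : N < d) : nsub K N d = 0 := by
  rw [nsub, Nat.card_eq_zero]
  left
  constructor
  rintro ⟨P, hP⟩
  have h1 : finrank K P ≤ finrank K (Fin N → K) := Submodule.finrank_le P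
  rw [hP, Module.finrank_fintype_fun_eq_card, Fintype.card_fin] at h1
  omega

-- real versions
theorem nsub_real {N d : ℕ} (hd : d ≤ N) :
    (nsub K N d : ℝ) * ∏ i ∈ Finset.range d, ((Q : ℝ) ^ d - (Q : ℝ) ^ i)
      = ∏ i ∈ Finset.range d, ((Q : ℝ) ^ N - (Q : ℝ) ^ i) := by
  have hQ1 : 1 ≤ Q := le_of_lt (one_lt_Q (K := K))
  have hcast : ∀ a b : ℕ, b ≤ a → ((Q ^ a - Q ^ b : ℕ) : ℝ) = (Q : ℝ) ^ a - (Q : ℝ) ^ b := by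
    intro a b hba
    rw [Nat.cast_sub (Nat.pow_le_pow_right hQ1 hba), Nat.cast_pow, Nat.cast_pow]
  have h := congrArg (Nat.cast : ℕ → ℝ) (nsub_mul (K := K) hd)
  rw [Nat.cast_mul, Nat.cast_prod, Nat.cast_prod,
    Finset.prod_congr rfl (fun i hi => hcast d i (le_of_lt (Finset.mem_range.mp hi))),
    Finset.prod_congr rfl
      (fun i hi => hcast N i (le_of_lt (lt_of_lt_of_le (Finset.mem_range.mp hi) hd)))] at h
  exact h

theorem one_lt_Qr : (1 : ℝ) < Q := by exact_mod_cast one_lt_Q (K := K)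

theorem Qr_sub_one_ne : ((Q : ℝ) - 1) ≠ 0 := by
  have := one_lt_Qr (K := K); linarith

theorem nsub_one_real {N : ℕ} (hN : 1 ≤ N) :
    (nsub K N 1 : ℝ) = ((Q : ℝ) ^ N - 1) / ((Q : ℝ) - 1) := by
  have h := nsub_real (K := K) (N := N) (d := 1) hN
  simp only [Finset.prod_range_one, pow_one, pow_zero] at h
  rw [eq_div_iff (Qr_sub_one_ne (K := K))]
  exact h

theorem Qr_pow_sub_one_ne {a : ℕ} (ha : 1 ≤ a) : ((Q : ℝ) ^ a - 1) ≠ 0 := by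
  have h1 := one_lt_Qr (K := K)
  have : (1 : ℝ) < (Q : ℝ) ^ a := one_lt_pow₀ h1 (by omega)
  linarith

theorem prod_sub_pow {a m : ℕ} (h : m ≤ a) :
    ∏ i ∈ Finset.range m, ((Q : ℝ) ^ a - (Q : ℝ) ^ i)
      = (∏ i ∈ Finset.range m, (Q : ℝ) ^ i) *
          ∏ i ∈ Finset.range m, ((Q : ℝ) ^ (a - i) - 1) := by
  rw [← Finset.prod_mul_distrib]
  refine Finset.prod_congr rfl (fun i hi => ?_)
  have hia : i ≤ a := le_trans (le_of_lt (Finset.mem_range.mp hi)) h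
  rw [mul_sub, mul_one, ← pow_add, Nat.add_sub_cancel' hia]

theorem nsub_hyperplane_real {N : ℕ} (hN : 1 ≤ N) :
    (nsub K N (N - 1) : ℝ) = ((Q : ℝ) ^ N - 1) / ((Q : ℝ) - 1) := by
  set m := N - 1 with hm
  have hmN : m ≤ N := Nat.sub_le N 1
  have hNm : N = m + 1 := by omega
  have h := nsub_real (K := K) (N := N) (d := m) hmN
  rw [prod_sub_pow (K := K) (le_refl m), prod_sub_pow (K := K) hmN] at h
  have hrefl1 : ∏ i ∈ Finset.range m, ((Q : ℝ) ^ (N - i) - 1)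
      = ∏ j ∈ Finset.range m, ((Q : ℝ) ^ (j + 2) - 1) := by
    rw [← Finset.prod_range_reflect (fun j => (Q : ℝ) ^ (j + 2) - 1) m]
    refine Finset.prod_congr rfl (fun i hi => ?_)
    have := Finset.mem_range.mp hi
    congr 2
    omega
  have hrefl2 : ∏ i ∈ Finset.range m, ((Q : ℝ) ^ (m - i) - 1)
      = ∏ j ∈ Finset.range m, ((Q : ℝ) ^ (j + 1) - 1) := by
    rw [← Finset.prod_range_reflect (fun j => (Q : ℝ) ^ (j + 1) - 1) m]
    refine Finset.prod_congr rfl (fun i hi => ?_)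
    have := Finset.mem_range.mp hi
    congr 2
    omega
  have htel : (∏ j ∈ Finset.range m, ((Q : ℝ) ^ (j + 2) - 1)) * ((Q : ℝ) - 1)
      = ((Q : ℝ) ^ N - 1) * ∏ j ∈ Finset.range m, ((Q : ℝ) ^ (j + 1) - 1) := by
    have h1 := Finset.prod_range_succ' (fun j => (Q : ℝ) ^ (j + 1) - 1) m
    have h2 := Finset.prod_range_succ (fun j => (Q : ℝ) ^ (j + 1) - 1) m
    simp only [zero_add, pow_one] at h1
    have e1 : ∏ k ∈ Finset.range m, ((Q : ℝ) ^ (k + 1 + 1) - 1)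
        = ∏ j ∈ Finset.range m, ((Q : ℝ) ^ (j + 2) - 1) :=
      Finset.prod_congr rfl (fun i _ => by norm_num)
    rw [e1] at h1
    rw [h1] at h2
    rw [hNm]
    linarith [h2]
  have hP : (∏ i ∈ Finset.range m, (Q : ℝ) ^ i) ≠ 0 := by
    apply Finset.prod_ne_zero_iff.mpr
    intro i _
    positivity
  have hT : (∏ j ∈ Finset.range m, ((Q : ℝ) ^ (j + 1) - 1)) ≠ 0 := by
    apply Finset.prod_ne_zero_iff.mpr
    intro i _
    exact Qr_pow_sub_one_ne (K := K) (by omega)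
  rw [hrefl1, hrefl2] at h
  rw [eq_div_iff (Qr_sub_one_ne (K := K))]
  have h3 : (↑(nsub K N m) * ((Q : ℝ) - 1)) * ((∏ i ∈ Finset.range m, (Q : ℝ) ^ i) *
      ∏ j ∈ Finset.range m, ((Q : ℝ) ^ (j + 1) - 1))
      = ((Q : ℝ) ^ N - 1) * ((∏ i ∈ Finset.range m, (Q : ℝ) ^ i) *
      ∏ j ∈ Finset.range m, ((Q : ℝ) ^ (j + 1) - 1)) := by
    calc (↑(nsub K N m) * ((Q : ℝ) - 1)) * ((∏ i ∈ Finset.range m, (Q : ℝ) ^ i) *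
        ∏ j ∈ Finset.range m, ((Q : ℝ) ^ (j + 1) - 1))
        = (↑(nsub K N m) * ((∏ i ∈ Finset.range m, (Q : ℝ) ^ i) *
            ∏ j ∈ Finset.range m, ((Q : ℝ) ^ (j + 1) - 1))) * ((Q : ℝ) - 1) := by ring
      _ = ((∏ i ∈ Finset.range m, (Q : ℝ) ^ i) *
            ∏ j ∈ Finset.range m, ((Q : ℝ) ^ (j + 2) - 1)) * ((Q : ℝ) - 1) := by rw [h]
      _ = (∏ i ∈ Finset.range m, (Q : ℝ) ^ i) *
            ((∏ j ∈ Finset.range m, ((Q : ℝ) ^ (j + 2) - 1)) * ((Q : ℝ) - 1)) := by ring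
      _ = (∏ i ∈ Finset.range m, (Q : ℝ) ^ i) *
            (((Q : ℝ) ^ N - 1) * ∏ j ∈ Finset.range m, ((Q : ℝ) ^ (j + 1) - 1)) := by rw [htel]
      _ = ((Q : ℝ) ^ N - 1) * ((∏ i ∈ Finset.range m, (Q : ℝ) ^ i) *
            ∏ j ∈ Finset.range m, ((Q : ℝ) ^ (j + 1) - 1)) := by ring
  exact mul_right_cancel₀ (mul_ne_zero hP hT) h3

end Counting2


section Interval
variable {K V : Type*} [Field K] [Fintype K] [AddCommGroup V] [Module K V]
  [FiniteDimensional K V]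

theorem finrank_map_mkQ_add {x w : Submodule K V} (h : x ≤ w) :
    finrank K (w.map x.mkQ) + finrank K x = finrank K w := by
  have hr := LinearMap.finrank_range_add_finrank_ker (x.mkQ.comp w.subtype)
  rw [LinearMap.range_comp, Submodule.range_subtype, LinearMap.ker_comp, Submodule.ker_mkQ,
    (Submodule.comapSubtypeEquivOfLe h).finrank_eq] at hr
  exact hr

theorem card_interval {x z : Submodule K V} (hxz : x ≤ z) {m : ℕ} (hxm : finrank K x ≤ m) :
    Nat.card {w : Submodule K V // x ≤ w ∧ w ≤ z ∧ finrank K w = m}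
      = nsub K (finrank K z - finrank K x) (m - finrank K x) := by
  set Z : Submodule K (V ⧸ x) := z.map x.mkQ with hZ
  have hZfr : finrank K Z + finrank K x = finrank K z := finrank_map_mkQ_add hxz
  -- step 1: to submodules of the quotient
  have step1 : Nat.card {w : Submodule K V // x ≤ w ∧ (w ≤ z ∧ finrank K w = m)}
      = Nat.card {P : Submodule K (V ⧸ x) // P ≤ Z ∧ finrank K P = m - finrank K x} := by
    refine Nat.card_congr (Equiv.symm ?_)
    refine Equiv.trans (Equiv.subtypeEquivRight (q := fun P : Submodule K (V ⧸ x) =>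
        P.comap x.mkQ ≤ z ∧ finrank K (P.comap x.mkQ) = m) (fun P => ?_)) ?_
    · have hPx : x ≤ P.comap x.mkQ := Submodule.le_comap_mkQ x P
      have hmap : (P.comap x.mkQ).map x.mkQ = P :=
        Submodule.map_comap_eq_of_surjective (Submodule.mkQ_surjective x) P
      have hfr : finrank K P + finrank K x = finrank K (P.comap x.mkQ) := by
        have := finrank_map_mkQ_add hPx
        rwa [hmap] at this
      constructor
      · rintro ⟨h1, h2⟩
        constructor
        · calc P.comap x.mkQ ≤ Z.comap x.mkQ := Submodule.comap_mono h1
            _ = z := by rw [hZ, Submodule.comap_map_mkQ, sup_eq_right.mpr hxz]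
        · omega
      · rintro ⟨h1, h2⟩
        constructor
        · rw [← hmap]
          exact Submodule.map_mono h1
        · omega
    · exact Equiv.trans
        (Equiv.subtypeEquiv (Submodule.comapMkQRelIso x).toEquiv (fun P => Iff.rfl))
        ((Equiv.subtypeSubtypeEquivSubtypeInter (fun w : Submodule K V => x ≤ w)
          (fun w => w ≤ z ∧ finrank K w = m)))
  -- step 2: to submodules of Z
  have step2 : Nat.card {P : Submodule K (V ⧸ x) // P ≤ Z ∧ finrank K P = m - finrank K x}
      = Nat.card {p : Submodule K Z // finrank K p = m - finrank K x} := by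
    refine Nat.card_congr (Equiv.symm ?_)
    refine Equiv.trans (Equiv.subtypeEquivRight (q := fun p : Submodule K Z =>
        finrank K (p.map Z.subtype) = m - finrank K x) (fun p => ?_)) ?_
    · simp only [Submodule.finrank_map_subtype_eq]
    · exact Equiv.trans
        (Equiv.subtypeEquiv (Submodule.MapSubtype.orderIso Z).toEquiv (fun p => Iff.rfl))
        (Equiv.subtypeSubtypeEquivSubtypeInter (fun P : Submodule K (V ⧸ x) => P ≤ Z)
          (fun P => finrank K P = m - finrank K x))
  have e3 : Nat.card {p : Submodule K Z // finrank K p = m - finrank K x}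
      = nsub K (finrank K z - finrank K x) (m - finrank K x) :=
    nsub_eq_card (by omega)
  have hassoc : ∀ w : Submodule K V,
      (x ≤ w ∧ w ≤ z ∧ finrank K w = m) ↔ (x ≤ w ∧ (w ≤ z ∧ finrank K w = m)) := fun w => by tauto
  rw [Nat.card_congr (Equiv.subtypeEquivRight hassoc), step1, step2, e3]

theorem card_interval_zero {x z : Submodule K V} {m : ℕ} (hm : m < finrank K x) :
    Nat.card {w : Submodule K V // x ≤ w ∧ w ≤ z ∧ finrank K w = m} = 0 := by
  rw [Nat.card_eq_zero]
  left
  constructor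
  rintro ⟨w, hw1, _, hw3⟩
  have := Submodule.finrank_mono hw1
  omega

theorem card_interval_zero' {x z : Submodule K V} {m : ℕ} (hm : finrank K z < m) :
    Nat.card {w : Submodule K V // x ≤ w ∧ w ≤ z ∧ finrank K w = m} = 0 := by
  rw [Nat.card_eq_zero]
  left
  constructor
  rintro ⟨w, _, hw2, hw3⟩
  have := Submodule.finrank_mono hw2
  omega

end Interval


section Wcalc
variable {K V : Type*} [Field K] [Fintype K] [AddCommGroup V] [Module K V]
  [FiniteDimensional K V] [Fintype (Submodule K V)]

local notation "Q" => Fintype.card K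

theorem finrank_inf_left_iff {x y : Submodule K V} :
    finrank K ↥(x ⊓ y) = finrank K x ↔ x ≤ y := by
  constructor
  · intro h
    have h1 : x ⊓ y ≤ x := inf_le_left
    have h2 : x ⊓ y = x := Submodule.eq_of_le_of_finrank_eq h1 h
    exact le_trans (le_of_eq h2.symm) inf_le_right
  · intro h
    rw [inf_of_le_left h]

theorem Wmat_transpose (a b : ℤ) : (Wmat K V a b)ᵀ = Wmat K V b a := by
  ext x y
  show Wmat K V a b y x = Wmat K V b a x y
  simp only [Wmat, Matrix.of_apply]
  refine if_congr ?_ rfl rfl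
  rw [show y ⊓ x = x ⊓ y from inf_comm y x, min_comm]
  tauto

theorem dotProduct_Wmat (a b : ℤ) (u w : Submodule K V → ℝ) :
    u ⬝ᵥ (Wmat K V a b *ᵥ w) = (Wmat K V b a *ᵥ u) ⬝ᵥ w := by
  rw [Matrix.dotProduct_mulVec, ← Wmat_transpose b a, Matrix.vecMul_transpose]

theorem Usub_supp {i : ℕ} {u : Submodule K V → ℝ} (hu : u ∈ Usub K V i) {x : Submodule K V}
    (hx : finrank K x ≠ i) : u x = 0 := by
  have h2 : u ∈ ⨅ x ∈ {x : Submodule K V | Module.finrank K x ≠ i},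
      LinearMap.ker (LinearMap.proj (R := ℝ) (φ := fun _ : Submodule K V => ℝ) x) := hu.2
  rw [Submodule.mem_iInf] at h2
  have h3 := h2 x
  rw [Submodule.mem_iInf] at h3
  simpa using h3 hx

theorem Usub_ker {i : ℕ} {u : Submodule K V → ℝ} (hu : u ∈ Usub K V i) :
    Wmat K V ((i : ℤ) - 1) (i : ℤ) *ᵥ u = 0 := by
  have h : u ∈ LinearMap.ker (Matrix.mulVecLin (Wmat K V ((i : ℤ) - 1) (i : ℤ))) := hu.1
  rwa [LinearMap.mem_ker, Matrix.mulVecLin_apply] at h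

theorem sum_indicator_card (P : Submodule K V → Prop) [DecidablePred P] :
    (∑ w : Submodule K V, if P w then (1 : ℝ) else 0)
      = (Nat.card {w : Submodule K V // P w} : ℝ) := by
  classical
  rw [Finset.sum_boole, Nat.card_eq_fintype_card, Fintype.card_subtype]

theorem Wmat_mul_apply (a b c : ℤ) (x y : Submodule K V) :
    (Wmat K V a b * Wmat K V b c) x y
      = (Nat.card {w : Submodule K V //
          ((finrank K x : ℤ) = a ∧ (finrank K w : ℤ) = b ∧ (finrank K ↥(x ⊓ w) : ℤ) = min a b) ∧
          ((finrank K w : ℤ) = b ∧ (finrank K y : ℤ) = c ∧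
            (finrank K ↥(w ⊓ y) : ℤ) = min b c)} : ℝ) := by
  classical
  rw [Matrix.mul_apply, ← sum_indicator_card]
  refine Finset.sum_congr rfl (fun w _ => ?_)
  simp only [Wmat, Matrix.of_apply]
  by_cases h1 : (finrank K x : ℤ) = a ∧ (finrank K w : ℤ) = b ∧
      (finrank K ↥(x ⊓ w) : ℤ) = min a b <;>
    by_cases h2 : (finrank K w : ℤ) = b ∧ (finrank K y : ℤ) = c ∧
      (finrank K ↥(w ⊓ y) : ℤ) = min b c <;>
    simp [h1, h2]

end Wcalc

section Wcalc2
variable {K V : Type*} [Field K] [Fintype K] [AddCommGroup V] [Module K V]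
  [FiniteDimensional K V] [Fintype (Submodule K V)]

local notation "Q" => Fintype.card K

theorem inf_cast_iff {x w : Submodule K V} {a : ℤ} (hx : (finrank K x : ℤ) = a) :
    ((finrank K ↥(x ⊓ w) : ℤ) = a) ↔ x ≤ w := by
  rw [← hx, Nat.cast_inj]
  exact finrank_inf_left_iff

theorem Wmat_mul_Wmat {a b c : ℕ} (hab : a ≤ b) (hbc : b ≤ c) :
    Wmat K V a b * Wmat K V b c = (nsub K (c - a) (b - a) : ℝ) • Wmat K V a c := by
  have hminab : min (a : ℤ) (b : ℤ) = a := min_eq_left (by exact_mod_cast hab)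
  have hminbc : min (b : ℤ) (c : ℤ) = b := min_eq_left (by exact_mod_cast hbc)
  have hminac : min (a : ℤ) (c : ℤ) = a := min_eq_left (by exact_mod_cast le_trans hab hbc)
  ext x y
  rw [Wmat_mul_apply, Matrix.smul_apply]
  simp only [Wmat, Matrix.of_apply, smul_eq_mul]
  by_cases hx : (finrank K x : ℤ) = a
  · by_cases hy : (finrank K y : ℤ) = c
    · by_cases hxy : x ≤ y
      · have hcount : Nat.card {w : Submodule K V //
            ((finrank K x : ℤ) = a ∧ (finrank K w : ℤ) = b ∧
              (finrank K ↥(x ⊓ w) : ℤ) = min (a:ℤ) b) ∧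
            ((finrank K w : ℤ) = b ∧ (finrank K y : ℤ) = c ∧
              (finrank K ↥(w ⊓ y) : ℤ) = min (b:ℤ) c)}
            = Nat.card {w : Submodule K V // x ≤ w ∧ w ≤ y ∧ finrank K w = b} := by
          refine Nat.card_congr (Equiv.subtypeEquivRight (fun w => ?_))
          rw [hminab, hminbc]
          constructor
          · rintro ⟨⟨-, hwb, hxw⟩, ⟨-, -, hwy⟩⟩
            exact ⟨(inf_cast_iff hx).mp hxw, (inf_cast_iff hwb).mp hwy, by exact_mod_cast hwb⟩
          · rintro ⟨h1, h2, h3⟩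
            have hwb : (finrank K w : ℤ) = b := by exact_mod_cast h3
            exact ⟨⟨hx, hwb, (inf_cast_iff hx).mpr h1⟩, ⟨hwb, hy, (inf_cast_iff hwb).mpr h2⟩⟩
        have hxa : finrank K x = a := by exact_mod_cast hx
        have hyc : finrank K y = c := by exact_mod_cast hy
        rw [hcount, card_interval hxy (by rw [hxa]; exact hab),
          if_pos ⟨hx, hy, by rw [hminac]; exact (inf_cast_iff hx).mpr hxy⟩, mul_one, hxa, hyc]
      · have hempty : IsEmpty {w : Submodule K V //
            ((finrank K x : ℤ) = a ∧ (finrank K w : ℤ) = b ∧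
              (finrank K ↥(x ⊓ w) : ℤ) = min (a:ℤ) b) ∧
            ((finrank K w : ℤ) = b ∧ (finrank K y : ℤ) = c ∧
              (finrank K ↥(w ⊓ y) : ℤ) = min (b:ℤ) c)} := by
          constructor
          rintro ⟨w, ⟨⟨-, hwb, hxw⟩, ⟨-, -, hwy⟩⟩⟩
          rw [hminab] at hxw
          rw [hminbc] at hwy
          exact hxy (le_trans ((inf_cast_iff hx).mp hxw) ((inf_cast_iff hwb).mp hwy))
        rw [Nat.card_of_isEmpty, if_neg, mul_zero, Nat.cast_zero]
        rintro ⟨-, -, hinf⟩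
        rw [hminac] at hinf
        exact hxy ((inf_cast_iff hx).mp hinf)
    · have hempty : IsEmpty {w : Submodule K V //
          ((finrank K x : ℤ) = a ∧ (finrank K w : ℤ) = b ∧
            (finrank K ↥(x ⊓ w) : ℤ) = min (a:ℤ) b) ∧
          ((finrank K w : ℤ) = b ∧ (finrank K y : ℤ) = c ∧
            (finrank K ↥(w ⊓ y) : ℤ) = min (b:ℤ) c)} := by
        constructor
        rintro ⟨w, ⟨-, ⟨-, hyc, -⟩⟩⟩
        exact hy hyc
      rw [Nat.card_of_isEmpty, if_neg, mul_zero, Nat.cast_zero]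
      rintro ⟨-, hyc, -⟩
      exact hy hyc
  · have hempty : IsEmpty {w : Submodule K V //
        ((finrank K x : ℤ) = a ∧ (finrank K w : ℤ) = b ∧
          (finrank K ↥(x ⊓ w) : ℤ) = min (a:ℤ) b) ∧
        ((finrank K w : ℤ) = b ∧ (finrank K y : ℤ) = c ∧
          (finrank K ↥(w ⊓ y) : ℤ) = min (b:ℤ) c)} := by
      constructor
      rintro ⟨w, ⟨⟨hxa, -, -⟩, -⟩⟩
      exact hx hxa
    rw [Nat.card_of_isEmpty, if_neg, mul_zero, Nat.cast_zero]
    rintro ⟨hxa, -, -⟩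
    exact hx hxa

end Wcalc2

section Wcalc3
variable {K V : Type*} [Field K] [Fintype K] [AddCommGroup V] [Module K V]
  [FiniteDimensional K V] [Fintype (Submodule K V)]

local notation "Q" => Fintype.card K

theorem finrank_inf_right_iff {w x : Submodule K V} :
    finrank K ↥(w ⊓ x) = finrank K x ↔ x ≤ w := by
  rw [inf_comm]
  exact finrank_inf_left_iff

theorem inf_cast_iff' {w y : Submodule K V} {b : ℤ} (hy : (finrank K y : ℤ) = b) :
    ((finrank K ↥(w ⊓ y) : ℤ) = b) ↔ y ≤ w := by
  rw [inf_comm]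
  exact inf_cast_iff hy

theorem Wmat_down (n : ℕ) (hV : finrank K V = n) {i k : ℕ} (hik : i ≤ k) (hkn : k + 1 ≤ n) :
    Wmat K V k (k + 1) * Wmat K V (k + 1) i
      = (((Q : ℝ) ^ (n - k) - (Q : ℝ) ^ i) / ((Q : ℝ) - 1)) • Wmat K V k i
        + Wmat K V k ((i : ℤ) - 1) * Wmat K V ((i : ℤ) - 1) i := by
  have hik' : (i : ℤ) ≤ (k : ℤ) := by exact_mod_cast hik
  have hm1 : min (k : ℤ) ((k : ℤ) + 1) = (k : ℤ) := min_eq_left (by omega)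
  have hm2 : min ((k : ℤ) + 1) (i : ℤ) = (i : ℤ) := min_eq_right (by omega)
  have hm3 : min (k : ℤ) ((i : ℤ) - 1) = (i : ℤ) - 1 := min_eq_right (by omega)
  have hm4 : min ((i : ℤ) - 1) (i : ℤ) = (i : ℤ) - 1 := min_eq_left (by omega)
  have hm5 : min (k : ℤ) (i : ℤ) = (i : ℤ) := min_eq_right hik'
  ext w x
  rw [Matrix.add_apply, Matrix.smul_apply, Wmat_mul_apply, Wmat_mul_apply]
  simp only [Wmat, Matrix.of_apply, smul_eq_mul, hm1, hm2, hm3, hm4, hm5]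
  by_cases hw : (finrank K w : ℤ) = (k : ℤ)
  case neg =>
    have h1 : IsEmpty {z : Submodule K V //
        ((finrank K w : ℤ) = (k : ℤ) ∧ (finrank K z : ℤ) = ((k : ℤ) + 1) ∧
          (finrank K ↥(w ⊓ z) : ℤ) = (k : ℤ)) ∧
        ((finrank K z : ℤ) = ((k : ℤ) + 1) ∧ (finrank K x : ℤ) = (i : ℤ) ∧
          (finrank K ↥(z ⊓ x) : ℤ) = (i : ℤ))} := ⟨by rintro ⟨z, ⟨hwk, -, -⟩, -⟩; exact hw hwk⟩
    have h2 : IsEmpty {y : Submodule K V //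
        ((finrank K w : ℤ) = (k : ℤ) ∧ (finrank K y : ℤ) = (i : ℤ) - 1 ∧
          (finrank K ↥(w ⊓ y) : ℤ) = (i : ℤ) - 1) ∧
        ((finrank K y : ℤ) = (i : ℤ) - 1 ∧ (finrank K x : ℤ) = (i : ℤ) ∧
          (finrank K ↥(y ⊓ x) : ℤ) = (i : ℤ) - 1)} := ⟨by rintro ⟨y, ⟨hwk, -, -⟩, -⟩; exact hw hwk⟩
    rw [Nat.card_of_isEmpty, Nat.card_of_isEmpty, if_neg (by rintro ⟨hwk, -, -⟩; exact hw hwk)]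
    norm_num
  case pos =>
  by_cases hx : (finrank K x : ℤ) = (i : ℤ)
  case neg =>
    have h1 : IsEmpty {z : Submodule K V //
        ((finrank K w : ℤ) = (k : ℤ) ∧ (finrank K z : ℤ) = ((k : ℤ) + 1) ∧
          (finrank K ↥(w ⊓ z) : ℤ) = (k : ℤ)) ∧
        ((finrank K z : ℤ) = ((k : ℤ) + 1) ∧ (finrank K x : ℤ) = (i : ℤ) ∧
          (finrank K ↥(z ⊓ x) : ℤ) = (i : ℤ))} := ⟨by rintro ⟨z, -, ⟨-, hxi, -⟩⟩; exact hx hxi⟩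
    have h2 : IsEmpty {y : Submodule K V //
        ((finrank K w : ℤ) = (k : ℤ) ∧ (finrank K y : ℤ) = (i : ℤ) - 1 ∧
          (finrank K ↥(w ⊓ y) : ℤ) = (i : ℤ) - 1) ∧
        ((finrank K y : ℤ) = (i : ℤ) - 1 ∧ (finrank K x : ℤ) = (i : ℤ) ∧
          (finrank K ↥(y ⊓ x) : ℤ) = (i : ℤ) - 1)} := ⟨by rintro ⟨y, -, ⟨-, hxi, -⟩⟩; exact hx hxi⟩
    rw [Nat.card_of_isEmpty, Nat.card_of_isEmpty, if_neg (by rintro ⟨-, hxi, -⟩; exact hx hxi)]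
    norm_num
  case pos =>
  -- main case
  have hNcard : Nat.card {z : Submodule K V //
      ((finrank K w : ℤ) = (k : ℤ) ∧ (finrank K z : ℤ) = ((k : ℤ) + 1) ∧
        (finrank K ↥(w ⊓ z) : ℤ) = (k : ℤ)) ∧
      ((finrank K z : ℤ) = ((k : ℤ) + 1) ∧ (finrank K x : ℤ) = (i : ℤ) ∧
        (finrank K ↥(z ⊓ x) : ℤ) = (i : ℤ))}
      = Nat.card {z : Submodule K V // w ⊔ x ≤ z ∧ z ≤ ⊤ ∧ finrank K z = k + 1} := by
    refine Nat.card_congr (Equiv.subtypeEquivRight (fun z => ?_))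
    constructor
    · rintro ⟨⟨-, hz, hwz⟩, ⟨-, -, hzx⟩⟩
      exact ⟨sup_le ((inf_cast_iff hw).mp hwz) ((inf_cast_iff' hx).mp hzx), le_top,
        by exact_mod_cast hz⟩
    · rintro ⟨hsup, -, hz⟩
      have hz' : (finrank K z : ℤ) = ((k : ℤ) + 1) := by exact_mod_cast hz
      have hwz : w ≤ z := le_trans le_sup_left hsup
      have hxz : x ≤ z := le_trans le_sup_right hsup
      exact ⟨⟨hw, hz', (inf_cast_iff hw).mpr hwz⟩, ⟨hz', hx, (inf_cast_iff' hx).mpr hxz⟩⟩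
  set d := finrank K ↥(w ⊓ x) with hd
  set s := finrank K ↥(w ⊔ x) with hs
  have hG : s + d = k + i := by
    have := Submodule.finrank_sup_add_finrank_inf_eq w x
    have hwn : finrank K w = k := by exact_mod_cast hw
    have hxn : finrank K x = i := by exact_mod_cast hx
    rw [← hs, ← hd, hwn, hxn] at this
    exact this
  have hdi : d ≤ i := by
    have : finrank K ↥(w ⊓ x) ≤ finrank K x := Submodule.finrank_mono inf_le_right
    have hxn : finrank K x = i := by exact_mod_cast hx
    omega
  have hfrtop : finrank K (⊤ : Submodule K V) = n := by rw [finrank_top]; exact hV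
  have hfrbot : finrank K (⊥ : Submodule K V) = 0 := finrank_bot K V
  rcases show d = i ∨ d + 1 = i ∨ d + 2 ≤ i by omega with hcase | hcase | hcase
  · -- x ≤ w
    have hxw : x ≤ w := finrank_inf_right_iff.mp (by
      have hxn : finrank K x = i := by exact_mod_cast hx
      omega)
    have hsk : s = k := by omega
    have hNval : (Nat.card {z : Submodule K V //
        w ⊔ x ≤ z ∧ z ≤ ⊤ ∧ finrank K z = k + 1} : ℝ)
        = ((Q : ℝ) ^ (n - k) - 1) / ((Q : ℝ) - 1) := by
      rw [card_interval le_top (by omega), hfrtop, ← hs, hsk]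
      have h1 : k + 1 - k = 1 := by omega
      rw [h1, nsub_one_real (by omega)]
    have hMval : (Nat.card {y : Submodule K V //
        ((finrank K w : ℤ) = (k : ℤ) ∧ (finrank K y : ℤ) = (i : ℤ) - 1 ∧
          (finrank K ↥(w ⊓ y) : ℤ) = (i : ℤ) - 1) ∧
        ((finrank K y : ℤ) = (i : ℤ) - 1 ∧ (finrank K x : ℤ) = (i : ℤ) ∧
          (finrank K ↥(y ⊓ x) : ℤ) = (i : ℤ) - 1)} : ℝ)
        = ((Q : ℝ) ^ i - 1) / ((Q : ℝ) - 1) := by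
      rcases Nat.eq_zero_or_pos i with hi0 | hipos
      · subst hi0
        have : IsEmpty {y : Submodule K V //
            ((finrank K w : ℤ) = (k : ℤ) ∧ (finrank K y : ℤ) = ((0 : ℕ) : ℤ) - 1 ∧
              (finrank K ↥(w ⊓ y) : ℤ) = ((0 : ℕ) : ℤ) - 1) ∧
            ((finrank K y : ℤ) = ((0 : ℕ) : ℤ) - 1 ∧ (finrank K x : ℤ) = ((0 : ℕ) : ℤ) ∧
              (finrank K ↥(y ⊓ x) : ℤ) = ((0 : ℕ) : ℤ) - 1)} :=
          ⟨by rintro ⟨y, ⟨-, hy, -⟩, -⟩; omega⟩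
        rw [Nat.card_of_isEmpty]
        norm_num
      · have hcongr : Nat.card {y : Submodule K V //
            ((finrank K w : ℤ) = (k : ℤ) ∧ (finrank K y : ℤ) = (i : ℤ) - 1 ∧
              (finrank K ↥(w ⊓ y) : ℤ) = (i : ℤ) - 1) ∧
            ((finrank K y : ℤ) = (i : ℤ) - 1 ∧ (finrank K x : ℤ) = (i : ℤ) ∧
              (finrank K ↥(y ⊓ x) : ℤ) = (i : ℤ) - 1)}
            = Nat.card {y : Submodule K V // ⊥ ≤ y ∧ y ≤ x ∧ finrank K y = i - 1} := by
          refine Nat.card_congr (Equiv.subtypeEquivRight (fun y => ?_))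
          constructor
          · rintro ⟨⟨-, hy, -⟩, ⟨-, -, hyx⟩⟩
            refine ⟨bot_le, (inf_cast_iff hy).mp hyx, by omega⟩
          · rintro ⟨-, hyx, hyfr⟩
            have hy : (finrank K y : ℤ) = (i : ℤ) - 1 := by omega
            refine ⟨⟨hw, hy, (inf_cast_iff' hy).mpr (le_trans hyx hxw)⟩,
              ⟨hy, hx, (inf_cast_iff hy).mpr hyx⟩⟩
        rw [hcongr, card_interval bot_le (by omega), hfrbot]
        have hxn : finrank K x = i := by exact_mod_cast hx
        rw [hxn]
        have e1 : i - 0 = i := by omega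
        have e2 : i - 1 - 0 = i - 1 := by omega
        rw [e1, e2, nsub_hyperplane_real hipos]
    rw [hNcard, hNval, hMval, if_pos ⟨hw, hx, by omega⟩, mul_one, ← add_div]
    congr 1
    ring
  · -- d + 1 = i
    have hnxw : ¬ x ≤ w := by
      intro hle
      have : w ⊓ x = x := inf_eq_right.mpr hle
      have hxn : finrank K x = i := by exact_mod_cast hx
      rw [this] at hd
      omega
    have hsk : s = k + 1 := by omega
    have hNval : (Nat.card {z : Submodule K V //
        w ⊔ x ≤ z ∧ z ≤ ⊤ ∧ finrank K z = k + 1} : ℝ) = 1 := by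
      rw [card_interval le_top (by omega), hfrtop, ← hs, hsk]
      have h1 : k + 1 - (k + 1) = 0 := by omega
      rw [h1, nsub_zero]
      norm_num
    have hMval : (Nat.card {y : Submodule K V //
        ((finrank K w : ℤ) = (k : ℤ) ∧ (finrank K y : ℤ) = (i : ℤ) - 1 ∧
          (finrank K ↥(w ⊓ y) : ℤ) = (i : ℤ) - 1) ∧
        ((finrank K y : ℤ) = (i : ℤ) - 1 ∧ (finrank K x : ℤ) = (i : ℤ) ∧
          (finrank K ↥(y ⊓ x) : ℤ) = (i : ℤ) - 1)} : ℝ) = 1 := by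
      have hcongr : Nat.card {y : Submodule K V //
          ((finrank K w : ℤ) = (k : ℤ) ∧ (finrank K y : ℤ) = (i : ℤ) - 1 ∧
            (finrank K ↥(w ⊓ y) : ℤ) = (i : ℤ) - 1) ∧
          ((finrank K y : ℤ) = (i : ℤ) - 1 ∧ (finrank K x : ℤ) = (i : ℤ) ∧
            (finrank K ↥(y ⊓ x) : ℤ) = (i : ℤ) - 1)}
          = Nat.card {y : Submodule K V // ⊥ ≤ y ∧ y ≤ w ⊓ x ∧ finrank K y = i - 1} := by
        refine Nat.card_congr (Equiv.subtypeEquivRight (fun y => ?_))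
        constructor
        · rintro ⟨⟨-, hy, hyw⟩, ⟨-, -, hyx⟩⟩
          exact ⟨bot_le, le_inf ((inf_cast_iff' hy).mp hyw) ((inf_cast_iff hy).mp hyx),
            by omega⟩
        · rintro ⟨-, hyinf, hyfr⟩
          have hy : (finrank K y : ℤ) = (i : ℤ) - 1 := by omega
          exact ⟨⟨hw, hy, (inf_cast_iff' hy).mpr (le_trans hyinf inf_le_left)⟩,
            ⟨hy, hx, (inf_cast_iff hy).mpr (le_trans hyinf inf_le_right)⟩⟩
      rw [hcongr, card_interval bot_le (by omega), hfrbot, ← hd]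
      have e1 : d - 0 = d := by omega
      have e2 : i - 1 - 0 = d := by omega
      rw [e1, e2, nsub_self]
      norm_num
    rw [hNcard, hNval, hMval, if_neg (by rintro ⟨-, -, hinf⟩; omega), mul_zero]
    norm_num
  · -- d + 2 ≤ i
    have hNval : (Nat.card {z : Submodule K V //
        w ⊔ x ≤ z ∧ z ≤ ⊤ ∧ finrank K z = k + 1} : ℝ) = 0 := by
      rw [card_interval_zero (by omega)]
      norm_num
    have hMval : (Nat.card {y : Submodule K V //
        ((finrank K w : ℤ) = (k : ℤ) ∧ (finrank K y : ℤ) = (i : ℤ) - 1 ∧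
          (finrank K ↥(w ⊓ y) : ℤ) = (i : ℤ) - 1) ∧
        ((finrank K y : ℤ) = (i : ℤ) - 1 ∧ (finrank K x : ℤ) = (i : ℤ) ∧
          (finrank K ↥(y ⊓ x) : ℤ) = (i : ℤ) - 1)} : ℝ) = 0 := by
      have hcongr : Nat.card {y : Submodule K V //
          ((finrank K w : ℤ) = (k : ℤ) ∧ (finrank K y : ℤ) = (i : ℤ) - 1 ∧
            (finrank K ↥(w ⊓ y) : ℤ) = (i : ℤ) - 1) ∧
          ((finrank K y : ℤ) = (i : ℤ) - 1 ∧ (finrank K x : ℤ) = (i : ℤ) ∧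
            (finrank K ↥(y ⊓ x) : ℤ) = (i : ℤ) - 1)}
          = Nat.card {y : Submodule K V // ⊥ ≤ y ∧ y ≤ w ⊓ x ∧ finrank K y = i - 1} := by
        refine Nat.card_congr (Equiv.subtypeEquivRight (fun y => ?_))
        constructor
        · rintro ⟨⟨-, hy, hyw⟩, ⟨-, -, hyx⟩⟩
          exact ⟨bot_le, le_inf ((inf_cast_iff' hy).mp hyw) ((inf_cast_iff hy).mp hyx),
            by omega⟩
        · rintro ⟨-, hyinf, hyfr⟩
          have hy : (finrank K y : ℤ) = (i : ℤ) - 1 := by omega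
          exact ⟨⟨hw, hy, (inf_cast_iff' hy).mpr (le_trans hyinf inf_le_left)⟩,
            ⟨hy, hx, (inf_cast_iff hy).mpr (le_trans hyinf inf_le_right)⟩⟩
      rw [hcongr, card_interval_zero' (by rw [← hd]; omega)]
      norm_num
    rw [hNcard, hNval, hMval, if_neg (by rintro ⟨-, -, hinf⟩; omega), mul_zero]
    norm_num

end Wcalc3

section Wcalc4
variable {K V : Type*} [Field K] [Fintype K] [AddCommGroup V] [Module K V]
  [FiniteDimensional K V] [Fintype (Submodule K V)]

local notation "Q" => Fintype.card K

theorem zpow_sub_one_ne' {q : ℝ} (hq : 1 < q) {z : ℤ} (hz : 0 < z) : q ^ z - 1 ≠ 0 := by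
  have := one_lt_zpow₀ hq hz
  linarith

theorem Wmat_diag_mulVec {i : ℕ} {u : Submodule K V → ℝ} (hu : u ∈ Usub K V i) :
    Wmat K V i i *ᵥ u = u := by
  classical
  funext x
  have hdef : (Wmat K V i i *ᵥ u) x = ∑ y, Wmat K V i i x y * u y := rfl
  by_cases hx : finrank K x = i
  · have hterm : ∀ y, Wmat K V i i x y * u y = if y = x then u y else 0 := by
      intro y
      by_cases hyx : y = x
      · subst hyx
        have h1 : Wmat K V i i y y = 1 := by
          simp only [Wmat, Matrix.of_apply, min_self]
          rw [if_pos ⟨by exact_mod_cast hx, by exact_mod_cast hx,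
            by rw [inf_idem]; exact_mod_cast hx⟩]
        rw [h1, one_mul, if_pos rfl]
      · by_cases hyi : finrank K y = i
        · have h0 : Wmat K V i i x y = 0 := by
            simp only [Wmat, Matrix.of_apply, min_self]
            rw [if_neg]
            rintro ⟨hx', hy', hinf⟩
            exact hyx (le_antisymm ((inf_cast_iff' hy').mp hinf) ((inf_cast_iff hx').mp hinf))
          rw [h0, zero_mul, if_neg hyx]
        · rw [Usub_supp hu hyi, mul_zero, if_neg hyx]
    rw [hdef, Finset.sum_congr rfl (fun y _ => hterm y), Finset.sum_ite_eq' Finset.univ x u,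
      if_pos (Finset.mem_univ x)]
  · have hterm : ∀ y, Wmat K V i i x y * u y = 0 := fun y => by
      have h0 : Wmat K V i i x y = 0 := by
        simp only [Wmat, Matrix.of_apply, min_self]
        rw [if_neg]
        rintro ⟨hx', -, -⟩
        exact hx (by exact_mod_cast hx')
      rw [h0, zero_mul]
    rw [hdef, Finset.sum_congr rfl (fun y _ => hterm y), Finset.sum_const_zero,
      Usub_supp hu hx]

theorem W_low {i : ℕ} {u : Submodule K V → ℝ} (hu : u ∈ Usub K V i) {k : ℕ} (hk : k < i) :
    Wmat K V k i *ᵥ u = 0 := by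
  obtain ⟨i', rfl⟩ : ∃ i', i = i' + 1 := ⟨i - 1, by omega⟩
  have hmm := Wmat_mul_Wmat (K := K) (V := V) (a := k) (b := i') (c := i' + 1)
    (by omega) (by omega)
  have hker : Wmat K V i' (i' + 1 : ℕ) *ᵥ u = 0 := by
    have h := Usub_ker hu
    have hc1 : ((i' + 1 : ℕ) : ℤ) - 1 = (i' : ℤ) := by push_cast; ring
    rwa [hc1] at h
  have happ : (Wmat K V k i' * Wmat K V i' (i' + 1 : ℕ)) *ᵥ u = 0 := by
    rw [← Matrix.mulVec_mulVec, hker, Matrix.mulVec_zero]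
  rw [hmm, Matrix.smul_mulVec] at happ
  have hne : ((nsub K (i' + 1 - k) (i' - k) : ℕ) : ℝ) ≠ 0 := by
    exact_mod_cast (nsub_pos (by omega)).ne'
  exact (smul_eq_zero.mp happ).resolve_left hne

theorem up_step {i k : ℕ} (hik : i ≤ k) (u : Submodule K V → ℝ) :
    Wmat K V ((k : ℤ) + 1) (k : ℤ) *ᵥ (Wmat K V k i *ᵥ u)
      = ((nsub K (k + 1 - i) (k - i) : ℕ) : ℝ) • (Wmat K V ((k : ℤ) + 1) (i : ℤ) *ᵥ u) := by
  have h := Wmat_mul_Wmat (K := K) (V := V) (a := i) (b := k) (c := k + 1) hik (Nat.le_succ k)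
  have ht := congrArg Matrix.transpose h
  rw [Matrix.transpose_mul, Wmat_transpose, Wmat_transpose, Matrix.transpose_smul,
    Wmat_transpose] at ht
  have hc : ((k + 1 : ℕ) : ℤ) = (k : ℤ) + 1 := by push_cast; ring
  rw [hc] at ht
  rw [Matrix.mulVec_mulVec, ht, Matrix.smul_mulVec]

theorem down_step (n : ℕ) (hV : finrank K V = n) {j k : ℕ} {v : Submodule K V → ℝ}
    (hv : v ∈ Usub K V j) (hjk : j ≤ k) (hkn : k + 1 ≤ n) :
    Wmat K V (k : ℤ) ((k : ℤ) + 1) *ᵥ (Wmat K V ((k : ℤ) + 1) (j : ℤ) *ᵥ v)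
      = (((Q : ℝ) ^ (n - k) - (Q : ℝ) ^ j) / ((Q : ℝ) - 1)) • (Wmat K V k j *ᵥ v) := by
  rw [Matrix.mulVec_mulVec, Wmat_down n hV hjk hkn, Matrix.add_mulVec,
    Matrix.smul_mulVec, ← Matrix.mulVec_mulVec, Usub_ker hv, Matrix.mulVec_zero, add_zero]

end Wcalc4

section Main
variable {K V : Type*} [Field K] [Fintype K] [AddCommGroup V] [Module K V]
  [FiniteDimensional K V] [Fintype (Submodule K V)]

local notation "Q" => Fintype.card K

theorem main_aux (n : ℕ) (hV : finrank K V = n) {i j : ℕ} (h2i : 2 * i ≤ n) (hij : i ≤ j)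
    {u v : Submodule K V → ℝ} (hu : u ∈ Usub K V i) (hv : v ∈ Usub K V j) :
    ∀ k : ℕ, k ≤ n →
      (Wmat K V k i *ᵥ u) ⬝ᵥ (Wmat K V k j *ᵥ v)
        = (if i = j then 1 else 0) * (Q : ℝ) ^ ((i : ℤ) * ((k : ℤ) - i)) *
            gbinom (Q : ℝ) ((n : ℤ) - 2 * i) ((k : ℤ) - i) * (u ⬝ᵥ v) := by
  have hq1 : (1 : ℝ) < (Q : ℝ) := one_lt_Qr
  intro k
  induction k with
  | zero =>
    intro h0n
    rcases Nat.eq_zero_or_pos j with hj0 | hjpos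
    · have hi0 : i = 0 := by omega
      subst hj0
      subst hi0
      rw [Wmat_diag_mulVec hu, Wmat_diag_mulVec hv, if_pos rfl]
      simp [gbinom]
    · rw [W_low hv hjpos, dotProduct_zero]
      by_cases hije : i = j
      · rw [if_pos hije, gbinom_neg (by omega)]
        ring
      · rw [if_neg hije]
        ring
  | succ k ih =>
    intro hk1n
    have hkn : k ≤ n := by omega
    have hcast1 : ((k + 1 : ℕ) : ℤ) = (k : ℤ) + 1 := by push_cast; ring
    rcases lt_trichotomy (k + 1) j with hlt | heq | hgt
    · rw [W_low hv hlt, dotProduct_zero]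
      by_cases hije : i = j
      · rw [if_pos hije, gbinom_neg (by omega)]
        ring
      · rw [if_neg hije]
        ring
    · rcases eq_or_lt_of_le hij with hije | hijlt
      · subst hije
        subst heq
        rw [Wmat_diag_mulVec hu, Wmat_diag_mulVec hv, if_pos rfl, sub_self, mul_zero,
          zpow_zero, gbinom_zero (by omega)]
        ring
      · subst heq
        have hik : i ≤ k := by omega
        have hC : (0 : ℝ) < ((nsub K (k + 1 - i) (k - i) : ℕ) : ℝ) := by
          exact_mod_cast nsub_pos (by omega)
        rw [Wmat_diag_mulVec hv]
        have hker : Wmat K V (k : ℤ) ((k : ℤ) + 1) *ᵥ v = 0 := by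
          have h := Usub_ker hv
          rw [hcast1, show (k : ℤ) + 1 - 1 = (k : ℤ) by ring] at h
          exact h
        have hup := up_step (K := K) (V := V) hik u
        have hzero : ((nsub K (k + 1 - i) (k - i) : ℕ) : ℝ) *
            ((Wmat K V ((k : ℤ) + 1) (i : ℤ) *ᵥ u) ⬝ᵥ v) = 0 := by
          calc ((nsub K (k + 1 - i) (k - i) : ℕ) : ℝ) *
              ((Wmat K V ((k : ℤ) + 1) (i : ℤ) *ᵥ u) ⬝ᵥ v)
              = (((nsub K (k + 1 - i) (k - i) : ℕ) : ℝ) •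
                  (Wmat K V ((k : ℤ) + 1) (i : ℤ) *ᵥ u)) ⬝ᵥ v := by
                rw [smul_dotProduct, smul_eq_mul]
            _ = (Wmat K V ((k : ℤ) + 1) (k : ℤ) *ᵥ (Wmat K V k i *ᵥ u)) ⬝ᵥ v := by rw [← hup]
            _ = v ⬝ᵥ (Wmat K V ((k : ℤ) + 1) (k : ℤ) *ᵥ (Wmat K V k i *ᵥ u)) :=
                dotProduct_comm _ _
            _ = (Wmat K V (k : ℤ) ((k : ℤ) + 1) *ᵥ v) ⬝ᵥ (Wmat K V k i *ᵥ u) :=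
                dotProduct_Wmat _ _ _ _
            _ = 0 := by rw [hker, zero_dotProduct]
        have hmain : (Wmat K V ((k : ℤ) + 1) (i : ℤ) *ᵥ u) ⬝ᵥ v = 0 :=
          (mul_eq_zero.mp hzero).resolve_left hC.ne'
        rw [hcast1, hmain, if_neg (by omega)]
        ring
    · have hjk : j ≤ k := by omega
      have hik : i ≤ k := le_trans hij hjk
      have hup := up_step (K := K) (V := V) hik u
      have hdown := down_step n hV hv hjk hk1n
      have hc1ne : ((nsub K (k + 1 - i) (k - i) : ℕ) : ℝ) ≠ 0 := by
        have : (0 : ℝ) < ((nsub K (k + 1 - i) (k - i) : ℕ) : ℝ) := by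
          exact_mod_cast nsub_pos (by omega)
        exact this.ne'
      rw [hcast1]
      have key : ((nsub K (k + 1 - i) (k - i) : ℕ) : ℝ) *
          ((Wmat K V ((k : ℤ) + 1) (i : ℤ) *ᵥ u) ⬝ᵥ (Wmat K V ((k : ℤ) + 1) (j : ℤ) *ᵥ v))
          = (((Q : ℝ) ^ (n - k) - (Q : ℝ) ^ j) / ((Q : ℝ) - 1)) *
            ((Wmat K V k i *ᵥ u) ⬝ᵥ (Wmat K V k j *ᵥ v)) := by
        calc ((nsub K (k + 1 - i) (k - i) : ℕ) : ℝ) *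
            ((Wmat K V ((k : ℤ) + 1) (i : ℤ) *ᵥ u) ⬝ᵥ (Wmat K V ((k : ℤ) + 1) (j : ℤ) *ᵥ v))
            = (((nsub K (k + 1 - i) (k - i) : ℕ) : ℝ) •
                (Wmat K V ((k : ℤ) + 1) (i : ℤ) *ᵥ u)) ⬝ᵥ
                (Wmat K V ((k : ℤ) + 1) (j : ℤ) *ᵥ v) := by
              rw [smul_dotProduct, smul_eq_mul]
          _ = (Wmat K V ((k : ℤ) + 1) (k : ℤ) *ᵥ (Wmat K V k i *ᵥ u)) ⬝ᵥ
                (Wmat K V ((k : ℤ) + 1) (j : ℤ) *ᵥ v) := by rw [← hup]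
          _ = (Wmat K V ((k : ℤ) + 1) (j : ℤ) *ᵥ v) ⬝ᵥ
                (Wmat K V ((k : ℤ) + 1) (k : ℤ) *ᵥ (Wmat K V k i *ᵥ u)) :=
              dotProduct_comm _ _
          _ = (Wmat K V (k : ℤ) ((k : ℤ) + 1) *ᵥ (Wmat K V ((k : ℤ) + 1) (j : ℤ) *ᵥ v)) ⬝ᵥ
                (Wmat K V k i *ᵥ u) := dotProduct_Wmat _ _ _ _
          _ = ((((Q : ℝ) ^ (n - k) - (Q : ℝ) ^ j) / ((Q : ℝ) - 1)) •
                (Wmat K V k j *ᵥ v)) ⬝ᵥ (Wmat K V k i *ᵥ u) := by rw [hdown]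
          _ = (((Q : ℝ) ^ (n - k) - (Q : ℝ) ^ j) / ((Q : ℝ) - 1)) *
                ((Wmat K V k j *ᵥ v) ⬝ᵥ (Wmat K V k i *ᵥ u)) := by
              rw [smul_dotProduct, smul_eq_mul]
          _ = (((Q : ℝ) ^ (n - k) - (Q : ℝ) ^ j) / ((Q : ℝ) - 1)) *
                ((Wmat K V k i *ᵥ u) ⬝ᵥ (Wmat K V k j *ᵥ v)) := by rw [dotProduct_comm]
      rw [ih hkn] at key
      refine mul_left_cancel₀ hc1ne ?_
      rw [key]
      by_cases hije : i = j
      · subst hije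
        rw [if_pos rfl]
        have hc1val : ((nsub K (k + 1 - i) (k - i) : ℕ) : ℝ)
            = ((Q : ℝ) ^ ((k : ℤ) + 1 - i) - 1) / ((Q : ℝ) - 1) := by
          rw [show k - i = (k + 1 - i) - 1 by omega, nsub_hyperplane_real (by omega),
            show ((Q : ℝ) ^ (k + 1 - i : ℕ)) = (Q : ℝ) ^ ((k : ℤ) + 1 - i) by
              rw [← zpow_natCast]; congr 1; omega]
        have hc2val : ((Q : ℝ) ^ (n - k) - (Q : ℝ) ^ i) / ((Q : ℝ) - 1)
            = ((Q : ℝ) ^ ((n : ℤ) - k) - (Q : ℝ) ^ (i : ℤ)) / ((Q : ℝ) - 1) := by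
          rw [show ((Q : ℝ) ^ (n - k : ℕ)) = (Q : ℝ) ^ ((n : ℤ) - k) by
              rw [← zpow_natCast]; congr 1; omega,
            show ((Q : ℝ) ^ (i : ℕ)) = (Q : ℝ) ^ ((i : ℤ)) by rw [← zpow_natCast]]
        have hstep := rhs_step hq1 (n := (n : ℤ)) (i := (i : ℤ)) (k := (k : ℤ))
          (by omega) (by omega) (by omega) (by omega)
        rw [hc1val, hc2val]
        have hgoal : (1 : ℝ) * (Q : ℝ) ^ ((i : ℤ) * ((k : ℤ) + 1 - i)) *
            gbinom (Q : ℝ) ((n : ℤ) - 2 * i) ((k : ℤ) + 1 - i) * (u ⬝ᵥ v)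
            = (((Q : ℝ) ^ ((n : ℤ) - k) - (Q : ℝ) ^ (i : ℤ)) /
                ((Q : ℝ) ^ ((k : ℤ) + 1 - i) - 1)) *
              ((1 : ℝ) * (Q : ℝ) ^ ((i : ℤ) * ((k : ℤ) - i)) *
                gbinom (Q : ℝ) ((n : ℤ) - 2 * i) ((k : ℤ) - i) * (u ⬝ᵥ v)) := by
          rw [show (1 : ℝ) * (Q : ℝ) ^ ((i : ℤ) * ((k : ℤ) + 1 - i)) *
              gbinom (Q : ℝ) ((n : ℤ) - 2 * i) ((k : ℤ) + 1 - i) * (u ⬝ᵥ v)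
              = ((Q : ℝ) ^ ((i : ℤ) * ((k : ℤ) + 1 - i)) *
                gbinom (Q : ℝ) ((n : ℤ) - 2 * i) ((k : ℤ) + 1 - i)) * (u ⬝ᵥ v) by ring,
            hstep]
          ring
        rw [hgoal]
        have hne1 : ((Q : ℝ) ^ ((k : ℤ) + 1 - i) - 1) ≠ 0 :=
          zpow_sub_one_ne' hq1 (by omega)
        have hne2 : ((Q : ℝ) - 1) ≠ 0 := Qr_sub_one_ne
        field_simp
      · rw [if_neg hije]
        ring
  end Main

/-- For `0 ≤ i, j ≤ ⌊n/2⌋`, `0 ≤ k ≤ n`, `u ∈ U_i` and `v ∈ U_j`: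
`uᵀ W_{i,k} W_{k,j} v = δ_{i,j} q^{i(k-i)} [n-2i choose k-i]_q (uᵀ v)`. -/
theorem dot_Wmat_Wmat
    {K V : Type*} [Field K] [Fintype K] [AddCommGroup V] [Module K V] [FiniteDimensional K V]
    [Fintype (Submodule K V)]
    (n i j k : ℕ) (hV : Module.finrank K V = n) (hi : i ≤ n / 2) (hj : j ≤ n / 2) (hk : k ≤ n)
    (u v : Submodule K V → ℝ) (hu : u ∈ Usub K V i) (hv : v ∈ Usub K V j) :
    u ⬝ᵥ (Wmat K V i k * Wmat K V k j).mulVec v =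
      (if i = j then 1 else 0) * (Fintype.card K : ℝ) ^ ((i : ℤ) * ((k : ℤ) - i)) *
        gbinom (Fintype.card K) ((n : ℤ) - 2 * i) ((k : ℤ) - i) * (u ⬝ᵥ v) := by
  have h2i : 2 * i ≤ n := by omega
  have h2j : 2 * j ≤ n := by omega
  rw [← Matrix.mulVec_mulVec, dotProduct_Wmat]
  rcases le_total i j with hij | hji
  · exact main_aux n hV h2i hij hu hv k hk
  · rw [dotProduct_comm, main_aux n hV h2j hji hv hu k hk]
    by_cases hije : i = j
    · subst hije
      rw [dotProduct_comm v u]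
    · rw [if_neg (fun h => hije h.symm), if_neg hije]
      ring
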